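/- For all κ₁, κ₂, α, β, θ ∈ ℝ, the matrix exponentials of the generators H = [[0, −κ₁, 0], [1, 0, 0], [0, 0, 0]], P = [[0, 0, −κ₁κ₂], [0, 0, 0], [1, 0, 0]], K = [[0, 0, 0], [0, 0, −κ₂], [0, 1, 0]] are given by exp(αH) = [[C_{κ₁}(α), −κ₁S_{κ₁}(α), 0], [S_{κ₁}(α), C_{κ₁}(α), 0], [0, 0, 1]], exp(βP) = [[C_{κ₁κ₂}(β), 0, −κ₁κ₂S_{κ₁κ₂}(β)], [0, 1, 0], [S_{κ₁κ₂}(β), 0, C_{κ₁κ₂}(β)]], and exp(θK) = [[1, 0, 0], [0, C_{κ₂}(θ), −κ₂S_{κ₂}(θ)], [0, S_{κ₂}(θ), C_{κ₂}(θ)]]. -/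

import Mathlib

open NormedSpace  -- for `exp`

/-- The generalized cosine `C_κ`. -/
noncomputable def Ck (κ φ : ℝ) : ℝ :=
  if 0 < κ then Real.cos (Real.sqrt κ * φ)
  else if κ = 0 then 1
  else Real.cosh (Real.sqrt (-κ) * φ)

/-- The generalized sine `S_κ`. -/
noncomputable def Sk (κ φ : ℝ) : ℝ :=
  if 0 < κ then Real.sin (Real.sqrt κ * φ) / Real.sqrt κ
  else if κ = 0 then φ
  else Real.sinh (Real.sqrt (-κ) * φ) / Real.sqrt (-κ)

private lemma hasSum_exp_real (x : ℝ) :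
    HasSum (fun n : ℕ => x ^ n / Nat.factorial n) (Real.exp x) := by
  rw [Real.exp_eq_exp_ℝ]
  exact expSeries_div_hasSum_exp x

private lemma hasSum_cosh_even (x : ℝ) :
    HasSum (fun k : ℕ => x ^ (2 * k) / Nat.factorial (2 * k)) (Real.cosh x) := by
  have h : HasSum (fun n : ℕ => (x ^ n / Nat.factorial n + (-x) ^ n / Nat.factorial n) / 2)
      ((Real.exp x + Real.exp (-x)) / 2) :=
    ((hasSum_exp_real x).add (hasSum_exp_real (-x))).div_const 2
  rw [← Real.cosh_eq] at h
  have hinj : Function.Injective (fun k : ℕ => 2 * k) := fun a b h => by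
    dsimp only at h; omega
  have hvanish : ∀ n : ℕ, n ∉ Set.range (fun k : ℕ => 2 * k) →
      (x ^ n / Nat.factorial n + (-x) ^ n / Nat.factorial n) / 2 = 0 := by
    intro n hn
    have hodd : Odd n := by
      rcases Nat.even_or_odd n with he | ho
      · obtain ⟨m, hm⟩ := he
        exact absurd ⟨m, by dsimp only; omega⟩ hn
      · exact ho
    rw [hodd.neg_pow]
    ring
  have h2 := (hinj.hasSum_iff hvanish).2 h
  convert h2 using 2 with k
  simp only [Function.comp_apply]
  rw [(even_two_mul k).neg_pow x]
  ring

private lemma hasSum_sinh_odd (x : ℝ) :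
    HasSum (fun k : ℕ => x ^ (2 * k + 1) / Nat.factorial (2 * k + 1)) (Real.sinh x) := by
  have h : HasSum (fun n : ℕ => (x ^ n / Nat.factorial n - (-x) ^ n / Nat.factorial n) / 2)
      ((Real.exp x - Real.exp (-x)) / 2) :=
    ((hasSum_exp_real x).sub (hasSum_exp_real (-x))).div_const 2
  rw [← Real.sinh_eq] at h
  have hinj : Function.Injective (fun k : ℕ => 2 * k + 1) := fun a b h => by
    dsimp only at h; omega
  have hvanish : ∀ n : ℕ, n ∉ Set.range (fun k : ℕ => 2 * k + 1) →
      (x ^ n / Nat.factorial n - (-x) ^ n / Nat.factorial n) / 2 = 0 := by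
    intro n hn
    have heven : Even n := by
      rcases Nat.even_or_odd n with he | ho
      · exact he
      · obtain ⟨m, hm⟩ := ho
        exact absurd ⟨m, by dsimp only; omega⟩ hn
    rw [heven.neg_pow]
    ring
  have h2 := (hinj.hasSum_iff hvanish).2 h
  convert h2 using 2 with k
  simp only [Function.comp_apply]
  rw [(odd_two_mul_add_one k).neg_pow x]
  ring

private lemma hasSum_Sk (κ t : ℝ) :
    HasSum (fun k : ℕ => (-κ) ^ k * t ^ (2 * k + 1) / Nat.factorial (2 * k + 1)) (Sk κ t) := by
  rcases lt_trichotomy 0 κ with hκ | hκ | hκ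
  · have hs : Real.sqrt κ ≠ 0 := ne_of_gt (Real.sqrt_pos.2 hκ)
    have hx2 : (Real.sqrt κ * t) ^ 2 = κ * t ^ 2 := by
      rw [mul_pow, Real.sq_sqrt hκ.le]
    have h := (Real.hasSum_sin (Real.sqrt κ * t)).div_const (Real.sqrt κ)
    rw [Sk, if_pos hκ]
    convert h using 2 with k
    · rfl
    have hx : (Real.sqrt κ * t) ^ (2 * k + 1) = (κ * t ^ 2) ^ k * (Real.sqrt κ * t) := by
      rw [pow_succ, pow_mul, hx2]
    have ht : t ^ (2 * k + 1) = (t ^ 2) ^ k * t := by rw [pow_succ, pow_mul]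
    rw [hx, ht, neg_pow κ, mul_pow]
    field_simp
  · rw [Sk, if_neg (by rw [← hκ]; exact lt_irrefl 0), if_pos hκ.symm]
    have h := hasSum_single (f := fun k : ℕ =>
        (-κ) ^ k * t ^ (2 * k + 1) / Nat.factorial (2 * k + 1)) 0
      (fun b hb => by rw [← hκ]; simp [zero_pow hb])
    simpa [← hκ] using h
  · have hpos : 0 < -κ := by linarith
    have hs : Real.sqrt (-κ) ≠ 0 := ne_of_gt (Real.sqrt_pos.2 hpos)
    have hx2 : (Real.sqrt (-κ) * t) ^ 2 = -κ * t ^ 2 := by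
      rw [mul_pow, Real.sq_sqrt hpos.le]
    have h := (hasSum_sinh_odd (Real.sqrt (-κ) * t)).div_const (Real.sqrt (-κ))
    rw [Sk, if_neg (by linarith), if_neg (by linarith)]
    convert h using 2 with k
    · rfl
    have hx : (Real.sqrt (-κ) * t) ^ (2 * k + 1) = (-κ * t ^ 2) ^ k * (Real.sqrt (-κ) * t) := by
      rw [pow_succ, pow_mul, hx2]
    have ht : t ^ (2 * k + 1) = (t ^ 2) ^ k * t := by rw [pow_succ, pow_mul]
    rw [hx, ht, mul_pow, neg_pow κ]
    field_simp

private lemma hasSum_Ck (κ t : ℝ) :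
    HasSum (fun k : ℕ => (-κ) ^ (k + 1) * t ^ (2 * k + 2) / Nat.factorial (2 * k + 2))
      (Ck κ t - 1) := by
  rcases lt_trichotomy 0 κ with hκ | hκ | hκ
  · have hx2 : (Real.sqrt κ * t) ^ 2 = κ * t ^ 2 := by
      rw [mul_pow, Real.sq_sqrt hκ.le]
    rw [Ck, if_pos hκ]
    have hshift : HasSum (fun n : ℕ => (-1 : ℝ) ^ (n + 1) * (Real.sqrt κ * t) ^ (2 * (n + 1))
        / Nat.factorial (2 * (n + 1))) (Real.cos (Real.sqrt κ * t) - 1) := by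
      apply (hasSum_nat_add_iff (f := fun n : ℕ => (-1 : ℝ) ^ n * (Real.sqrt κ * t) ^ (2 * n)
        / Nat.factorial (2 * n)) 1).2
      simpa using Real.hasSum_cos (Real.sqrt κ * t)
    convert hshift using 2 with k
    have hx : (Real.sqrt κ * t) ^ (2 * (k + 1)) = (κ * t ^ 2) ^ (k + 1) := by
      rw [pow_mul, hx2]
    rw [show 2 * k + 2 = 2 * (k + 1) from by ring, hx, pow_mul t, mul_pow, neg_pow κ]
    ring
  · have hz : ∀ k : ℕ, (-κ) ^ (k + 1) * t ^ (2 * k + 2) / Nat.factorial (2 * k + 2) = 0 := by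
      intro k; rw [← hκ]; simp
    rw [Ck, if_neg (by rw [← hκ]; exact lt_irrefl 0), if_pos hκ.symm, sub_self]
    exact (funext hz : _ = fun _ => (0 : ℝ)) ▸ hasSum_zero
  · have hpos : 0 < -κ := by linarith
    have hx2 : (Real.sqrt (-κ) * t) ^ 2 = -κ * t ^ 2 := by
      rw [mul_pow, Real.sq_sqrt hpos.le]
    rw [Ck, if_neg (by linarith), if_neg (by linarith)]
    have hshift : HasSum (fun n : ℕ => (Real.sqrt (-κ) * t) ^ (2 * (n + 1))
        / Nat.factorial (2 * (n + 1))) (Real.cosh (Real.sqrt (-κ) * t) - 1) := by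
      apply (hasSum_nat_add_iff (f := fun n : ℕ => (Real.sqrt (-κ) * t) ^ (2 * n)
        / Nat.factorial (2 * n)) 1).2
      simpa using hasSum_cosh_even (Real.sqrt (-κ) * t)
    convert hshift using 2 with k
    have hx : (Real.sqrt (-κ) * t) ^ (2 * (k + 1)) = (-κ * t ^ 2) ^ (k + 1) := by
      rw [pow_mul, hx2]
    rw [show 2 * k + 2 = 2 * (k + 1) from by ring, hx, pow_mul t, mul_pow, neg_pow κ]

private lemma exp_gen (A D : Matrix (Fin 3) (Fin 3) ℝ) (κ t : ℝ)
    (h2 : A * A = (-κ) • D) (hDA : D * A = A) (hDD : D * D = D) :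
    exp (t • A) = 1 + Sk κ t • A + (Ck κ t - 1) • D := by
  have hodd : ∀ k : ℕ, A ^ (2 * k + 1) = (-κ) ^ k • A := by
    intro k; induction k with
    | zero => simp
    | succ n ih =>
      rw [show 2 * (n + 1) + 1 = 2 + (2 * n + 1) from by ring, pow_add, pow_two, h2, ih,
        smul_mul_assoc, mul_smul_comm, hDA, smul_smul, ← pow_succ']
  have heven : ∀ k : ℕ, A ^ (2 * k + 2) = (-κ) ^ (k + 1) • D := by
    intro k; induction k with
    | zero => rw [show 2 * 0 + 2 = 2 from rfl, pow_two, h2, pow_one]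
    | succ n ih =>
      rw [show 2 * (n + 1) + 2 = 2 + (2 * n + 2) from by ring, pow_add, pow_two, h2, ih,
        smul_mul_assoc, mul_smul_comm, hDD, smul_smul, ← pow_succ']
  have hfn : ∀ n : ℕ, ((Nat.factorial n : ℝ)⁻¹) • (t • A) ^ n
      = (t ^ n / Nat.factorial n) • A ^ n := by
    intro n
    rw [smul_pow, smul_smul, div_eq_mul_inv, mul_comm]
  have ho : HasSum (fun k : ℕ => ((Nat.factorial (2 * k + 1) : ℝ)⁻¹) • (t • A) ^ (2 * k + 1))
      (Sk κ t • A) := by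
    have h := (hasSum_Sk κ t).smul_const A
    convert h using 2 with k
    rw [hfn, hodd, smul_smul]
    congr 1
    ring
  have he1 : HasSum (fun k : ℕ =>
      ((Nat.factorial (2 * (k + 1)) : ℝ)⁻¹) • (t • A) ^ (2 * (k + 1))) ((Ck κ t - 1) • D) := by
    have h := (hasSum_Ck κ t).smul_const D
    convert h using 2 with k
    rw [show 2 * (k + 1) = 2 * k + 2 from by ring, hfn, heven, smul_smul]
    congr 1
    ring
  have he : HasSum (fun k : ℕ => ((Nat.factorial (2 * k) : ℝ)⁻¹) • (t • A) ^ (2 * k))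
      (1 + (Ck κ t - 1) • D) := by
    have h := (hasSum_nat_add_iff
      (f := fun k : ℕ => ((Nat.factorial (2 * k) : ℝ)⁻¹) • (t • A) ^ (2 * k)) 1).1 he1
    simpa [add_comm] using h
  have htotal := HasSum.even_add_odd
    (f := fun n : ℕ => ((Nat.factorial n : ℝ)⁻¹) • (t • A) ^ n) he ho
  rw [exp_eq_tsum ℝ]
  refine htotal.tsum_eq.trans ?_
  abel

theorem exp_of_generators (κ₁ κ₂ α β θ : ℝ) :
    let H : Matrix (Fin 3) (Fin 3) ℝ := !![0, -κ₁, 0; 1, 0, 0; 0, 0, 0]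
    let P : Matrix (Fin 3) (Fin 3) ℝ := !![0, 0, -κ₁ * κ₂; 0, 0, 0; 1, 0, 0]
    let K : Matrix (Fin 3) (Fin 3) ℝ := !![0, 0, 0; 0, 0, -κ₂; 0, 1, 0]
    exp (α • H) = !![Ck κ₁ α, -κ₁ * Sk κ₁ α, 0; Sk κ₁ α, Ck κ₁ α, 0; 0, 0, 1] ∧
    exp (β • P) = !![Ck (κ₁ * κ₂) β, 0, -(κ₁ * κ₂) * Sk (κ₁ * κ₂) β; 0, 1, 0;
      Sk (κ₁ * κ₂) β, 0, Ck (κ₁ * κ₂) β] ∧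
    exp (θ • K) = !![1, 0, 0; 0, Ck κ₂ θ, -κ₂ * Sk κ₂ θ; 0, Sk κ₂ θ, Ck κ₂ θ] := by
  refine ⟨?_, ?_, ?_⟩
  · rw [exp_gen _ !![1, 0, 0; 0, 1, 0; 0, 0, 0] κ₁ α ?_ ?_ ?_]
    · ext i j
      fin_cases i <;> fin_cases j <;>
        simp [Matrix.add_apply, Matrix.smul_apply, Matrix.one_apply, Matrix.vecHead, Matrix.vecTail] <;> ring
    · ext i j
      fin_cases i <;> fin_cases j <;>
        simp [Matrix.mul_apply, Fin.sum_univ_succ, Matrix.smul_apply, Matrix.vecHead, Matrix.vecTail] <;> ring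
    · ext i j
      fin_cases i <;> fin_cases j <;>
        simp [Matrix.mul_apply, Fin.sum_univ_succ, Matrix.vecHead, Matrix.vecTail] <;> ring
    · ext i j
      fin_cases i <;> fin_cases j <;>
        simp [Matrix.mul_apply, Fin.sum_univ_succ, Matrix.vecHead, Matrix.vecTail] <;> ring
  · rw [exp_gen _ !![1, 0, 0; 0, 0, 0; 0, 0, 1] (κ₁ * κ₂) β ?_ ?_ ?_]
    · ext i j
      fin_cases i <;> fin_cases j <;>
        simp [Matrix.add_apply, Matrix.smul_apply, Matrix.one_apply, Matrix.vecHead, Matrix.vecTail] <;> ring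
    · ext i j
      fin_cases i <;> fin_cases j <;>
        simp [Matrix.mul_apply, Fin.sum_univ_succ, Matrix.smul_apply, Matrix.vecHead, Matrix.vecTail] <;> ring
    · ext i j
      fin_cases i <;> fin_cases j <;>
        simp [Matrix.mul_apply, Fin.sum_univ_succ, Matrix.vecHead, Matrix.vecTail] <;> ring
    · ext i j
      fin_cases i <;> fin_cases j <;>
        simp [Matrix.mul_apply, Fin.sum_univ_succ, Matrix.vecHead, Matrix.vecTail] <;> ring
  · rw [exp_gen _ !![0, 0, 0; 0, 1, 0; 0, 0, 1] κ₂ θ ?_ ?_ ?_]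
    · ext i j
      fin_cases i <;> fin_cases j <;>
        simp [Matrix.add_apply, Matrix.smul_apply, Matrix.one_apply, Matrix.vecHead, Matrix.vecTail] <;> ring
    · ext i j
      fin_cases i <;> fin_cases j <;>
        simp [Matrix.mul_apply, Fin.sum_univ_succ, Matrix.smul_apply, Matrix.vecHead, Matrix.vecTail] <;> ring
    · ext i j
      fin_cases i <;> fin_cases j <;>
        simp [Matrix.mul_apply, Fin.sum_univ_succ, Matrix.vecHead, Matrix.vecTail] <;> ring
    · ext i j
      fin_cases i <;> fin_cases j <;>
        simp [Matrix.mul_apply, Fin.sum_univ_succ, Matrix.vecHead, Matrix.vecTail] <;> ring
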